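/- Let n ≥ 1 and α ∈ ℕ be such that the block moment matrix M_n^{(α)} is invertible. Then there exists a unique monic matrix polynomial P of degree n with ⟨P, x^i·I_p⟩_θ^α = 0 for all 0 ≤ i ≤ n−1, and there exists a unique monic matrix polynomial Q of degree n with ⟨x^i·I_p, Q⟩_θ^α = 0 for all 0 ≤ i ≤ n−1. -/

import Mathlib

open MeasureTheory Polynomial Matrix Filter

/-- Evaluation of a matrix polynomial at a real scalar. -/
noncomputable def mpEval {p : ℕ} (f : Polynomial (Matrix (Fin p) (Fin p) ℝ)) (x : ℝ) :
    Matrix (Fin p) (Fin p) ℝ :=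
  f.sum fun k a => x ^ k • a

/-- The adjacent matrix-valued θ-deformed bilinear form
`⟨f, g⟩_θ^α = ∫ f(x) · x^α · W(x) · g(x^θ)ᵀ dx`, computed entrywise. -/
noncomputable def bform {p : ℕ} (θ : ℕ) (W : ℝ → Matrix (Fin p) (Fin p) ℝ) (α : ℕ)
    (f g : Polynomial (Matrix (Fin p) (Fin p) ℝ)) : Matrix (Fin p) (Fin p) ℝ :=
  Matrix.of fun i j => ∫ x : ℝ, (mpEval f x * (x ^ α • W x) * (mpEval g (x ^ θ))ᵀ) i j

/-- A matrix polynomial is monic of degree `n`: the `x^n` coefficient is `I_p`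
and all higher coefficients vanish. -/
def MonicDeg {p : ℕ} (f : Polynomial (Matrix (Fin p) (Fin p) ℝ)) (n : ℕ) : Prop :=
  f.coeff n = 1 ∧ ∀ k : ℕ, n < k → f.coeff k = 0

/-- The k-th moment `m_k = ∫ x^k W(x) dx`, computed entrywise. -/
noncomputable def mom {p : ℕ} (W : ℝ → Matrix (Fin p) (Fin p) ℝ) (k : ℕ) :
    Matrix (Fin p) (Fin p) ℝ :=
  Matrix.of fun i j => ∫ x : ℝ, x ^ k * W x i j

/-- The block moment matrix `M_n^{(α)} = (m_{α+i+jθ})_{i,j=0}^{n-1}`, as an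
`n × n` matrix over the ring of `p × p` real matrices. -/
noncomputable def momMat {p : ℕ} (θ : ℕ) (W : ℝ → Matrix (Fin p) (Fin p) ℝ) (n α : ℕ) :
    Matrix (Fin n) (Fin n) (Matrix (Fin p) (Fin p) ℝ) :=
  Matrix.of fun i j => mom W (α + (i : ℕ) + (j : ℕ) * θ)

lemma intA {p : ℕ} (W : ℝ → Matrix (Fin p) (Fin p) ℝ)
    (hWint : ∀ (k : ℕ) (i j : Fin p), Integrable fun x : ℝ => x ^ k * W x i j)
    (A B : Matrix (Fin p) (Fin p) ℝ) (m : ℕ) (i j : Fin p) :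
    Integrable (fun x : ℝ => x ^ m * (A * W x * B) i j) ∧
      ∫ x : ℝ, x ^ m * (A * W x * B) i j = (A * mom W m * B) i j := by
  have hrep : (fun x : ℝ => x ^ m * (A * W x * B) i j)
      = fun x => ∑ b : Fin p, ∑ a : Fin p, (A i a * B b j) * (x ^ m * W x a b) := by
    funext x
    simp only [Matrix.mul_apply, Finset.sum_mul, Finset.mul_sum]
    exact Finset.sum_congr rfl fun b _ => Finset.sum_congr rfl fun a _ => by ring
  have hint : ∀ b : Fin p, Integrable (fun x : ℝ => ∑ a : Fin p, (A i a * B b j) * (x ^ m * W x a b)) :=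
    fun b => integrable_finset_sum _ fun a _ => (hWint m a b).const_mul _
  constructor
  · rw [hrep]; exact integrable_finset_sum _ fun b _ => hint b
  · rw [hrep, integral_finset_sum _ fun b _ => hint b]
    have h1 : ∀ b : Fin p, (∫ x : ℝ, ∑ a : Fin p, (A i a * B b j) * (x ^ m * W x a b))
        = ∑ a : Fin p, (A i a * B b j) * mom W m a b := by
      intro b
      rw [integral_finset_sum _ fun a _ => (hWint m a b).const_mul _]
      exact Finset.sum_congr rfl fun a _ => by rw [MeasureTheory.integral_const_mul]; rfl
    rw [Finset.sum_congr rfl fun b _ => h1 b]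
    simp only [Matrix.mul_apply, Finset.sum_mul, mom, Matrix.of_apply]
    exact Finset.sum_congr rfl fun b _ => Finset.sum_congr rfl fun a _ => by ring

lemma bform_eq {p θ : ℕ} (W : ℝ → Matrix (Fin p) (Fin p) ℝ)
    (hWint : ∀ (k : ℕ) (i j : Fin p), Integrable fun x : ℝ => x ^ k * W x i j)
    (α : ℕ) (f g : Polynomial (Matrix (Fin p) (Fin p) ℝ)) :
    bform θ W α f g = ∑ k ∈ f.support, ∑ l ∈ g.support,
      f.coeff k * mom W (α + k + l * θ) * (g.coeff l)ᵀ := by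
  have hx : ∀ x : ℝ, mpEval f x * (x ^ α • W x) * (mpEval g (x ^ θ))ᵀ
      = ∑ k ∈ f.support, ∑ l ∈ g.support,
          x ^ (α + k + l * θ) • (f.coeff k * W x * (g.coeff l)ᵀ) := by
    intro x
    unfold mpEval
    rw [Polynomial.sum_def, Polynomial.sum_def, Matrix.transpose_sum]
    simp only [Matrix.transpose_smul, Finset.sum_mul, Finset.mul_sum,
      smul_mul_assoc, mul_smul_comm, Finset.smul_sum, smul_smul]
    rw [Finset.sum_comm]
    refine Finset.sum_congr rfl fun k _ => Finset.sum_congr rfl fun l _ => ?_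
    rw [mul_assoc]
    congr 1
    rw [← pow_mul, ← pow_add, ← pow_add]
    ring_nf
  ext i j
  show (∫ x : ℝ, (mpEval f x * (x ^ α • W x) * (mpEval g (x ^ θ))ᵀ) i j) = _
  have hx2 : (fun x : ℝ => (mpEval f x * (x ^ α • W x) * (mpEval g (x ^ θ))ᵀ) i j)
      = fun x => ∑ k ∈ f.support, ∑ l ∈ g.support,
          x ^ (α + k + l * θ) * ((f.coeff k * W x * (g.coeff l)ᵀ) i j) := by
    funext x
    rw [hx x]
    simp [Matrix.sum_apply, Matrix.smul_apply, smul_eq_mul]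
  rw [hx2, integral_finset_sum _ fun k _ => integrable_finset_sum _ fun l _ =>
      (intA W hWint (f.coeff k) (g.coeff l)ᵀ (α + k + l * θ) i j).1]
  have : ∀ k ∈ f.support,
      (∫ x : ℝ, ∑ l ∈ g.support, x ^ (α + k + l * θ) * ((f.coeff k * W x * (g.coeff l)ᵀ) i j))
      = ∑ l ∈ g.support, (f.coeff k * mom W (α + k + l * θ) * (g.coeff l)ᵀ) i j := by
    intro k _
    rw [integral_finset_sum _ fun l _ =>
      (intA W hWint (f.coeff k) (g.coeff l)ᵀ (α + k + l * θ) i j).1]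
    exact Finset.sum_congr rfl fun l _ =>
      (intA W hWint (f.coeff k) (g.coeff l)ᵀ (α + k + l * θ) i j).2
  rw [Finset.sum_congr rfl this]
  simp [Matrix.sum_apply]

lemma one_ne_zero_mat {p : ℕ} (hp : 1 ≤ p) :
    ¬(1 : Matrix (Fin p) (Fin p) ℝ) = 0 := by
  intro h
  have := congrFun (congrFun h ⟨0, hp⟩) ⟨0, hp⟩
  simp [Matrix.one_apply] at this

lemma bform_X_right {p θ : ℕ} (hp : 1 ≤ p) (W : ℝ → Matrix (Fin p) (Fin p) ℝ)
    (hWint : ∀ (k : ℕ) (i j : Fin p), Integrable fun x : ℝ => x ^ k * W x i j)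
    (α i n : ℕ) (f : Polynomial (Matrix (Fin p) (Fin p) ℝ))
    (hf : ∀ k : ℕ, n < k → f.coeff k = 0) :
    bform θ W α f (X ^ i)
      = ∑ k ∈ Finset.range (n + 1), f.coeff k * mom W (α + k + i * θ) := by
  rw [bform_eq W hWint, @Polynomial.support_X_pow _ _ (nontrivial_of_ne 1 0 (one_ne_zero_mat hp)) i]
  have h1 : ∀ k ∈ f.support,
      (∑ l ∈ {i}, f.coeff k * mom W (α + k + l * θ) * ((X ^ i : Polynomial (Matrix (Fin p) (Fin p) ℝ)).coeff l)ᵀ)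
        = f.coeff k * mom W (α + k + i * θ) := by
    intro k _
    rw [Finset.sum_singleton, Polynomial.coeff_X_pow]
    simp
  rw [Finset.sum_congr rfl h1]
  refine Finset.sum_subset ?_ ?_
  · intro k hk
    simp only [Finset.mem_range]
    by_contra h
    exact Polynomial.mem_support_iff.1 hk (hf k (by omega))
  · intro k _ hk
    rw [Polynomial.notMem_support_iff.1 hk, zero_mul]

lemma bform_X_left {p θ : ℕ} (hp : 1 ≤ p) (W : ℝ → Matrix (Fin p) (Fin p) ℝ)
    (hWint : ∀ (k : ℕ) (i j : Fin p), Integrable fun x : ℝ => x ^ k * W x i j)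
    (α i n : ℕ) (g : Polynomial (Matrix (Fin p) (Fin p) ℝ))
    (hg : ∀ k : ℕ, n < k → g.coeff k = 0) :
    bform θ W α (X ^ i) g
      = ∑ l ∈ Finset.range (n + 1), mom W (α + i + l * θ) * (g.coeff l)ᵀ := by
  rw [bform_eq W hWint, @Polynomial.support_X_pow _ _ (nontrivial_of_ne 1 0 (one_ne_zero_mat hp)) i]
  rw [Finset.sum_singleton]
  have h1 : ∀ l ∈ g.support,
      ((X ^ i : Polynomial (Matrix (Fin p) (Fin p) ℝ)).coeff i * mom W (α + i + l * θ) * (g.coeff l)ᵀ)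
        = mom W (α + i + l * θ) * (g.coeff l)ᵀ := by
    intro l _
    rw [Polynomial.coeff_X_pow]
    simp
  rw [Finset.sum_congr rfl h1]
  refine Finset.sum_subset ?_ ?_
  · intro k hk
    simp only [Finset.mem_range]
    by_contra h
    exact Polynomial.mem_support_iff.1 hk (hg k (by omega))
  · intro k _ hk
    rw [Polynomial.notMem_support_iff.1 hk, Matrix.transpose_zero, mul_zero]

lemma coeff_mk {p : ℕ} (n : ℕ) (c : ℕ → Matrix (Fin p) (Fin p) ℝ) (m : ℕ) :
    ((∑ k ∈ Finset.range (n + 1), Polynomial.C (c k) * X ^ k).coeff m)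
      = if m < n + 1 then c m else 0 := by
  rw [Polynomial.finset_sum_coeff]
  simp only [Polynomial.coeff_C_mul, Polynomial.coeff_X_pow, mul_ite, mul_one, mul_zero]
  rw [Finset.sum_ite_eq]
  simp [Finset.mem_range]

set_option maxHeartbeats 1000000 in
lemma exP {p θ : ℕ} (hp : 1 ≤ p) (W : ℝ → Matrix (Fin p) (Fin p) ℝ)
    (hWint : ∀ (k : ℕ) (i j : Fin p), Integrable fun x : ℝ => x ^ k * W x i j)
    (n α : ℕ) (hn : 1 ≤ n) (hM : IsUnit (momMat θ W n α)) :
    ∃! P : Polynomial (Matrix (Fin p) (Fin p) ℝ),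
      MonicDeg P n ∧ ∀ i < n, bform θ W α P (X ^ i) = 0 := by
  set M : Matrix (Fin n) (Fin n) (Matrix (Fin p) (Fin p) ℝ) := momMat θ W n α with hMdef
  set N : Matrix (Fin n) (Fin n) (Matrix (Fin p) (Fin p) ℝ) := Units.val hM.unit⁻¹ with hNdef
  have hNM : N * M = 1 := by
    have h := hM.unit.inv_mul
    rwa [hM.unit_spec] at h
  have hMN : M * N = 1 := by
    have h := hM.unit.mul_inv
    rwa [hM.unit_spec] at h
  -- the solution row vector
  set v : Fin n → Matrix (Fin p) (Fin p) ℝ := fun j => mom W (α + n + (j : ℕ) * θ) with hv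
  set d : Fin n → Matrix (Fin p) (Fin p) ℝ := fun k => -(Matrix.vecMul v N k) with hd
  have hdM : ∀ i' : Fin n, ∑ k : Fin n, d k * M k i' = -(v i') := by
    intro i'
    have h1 : ∑ k : Fin n, d k * M k i' = -(Matrix.vecMul (Matrix.vecMul v N) M i') := by
      simp only [hd, Matrix.vecMul, dotProduct, neg_mul, Finset.sum_neg_distrib]
    rw [h1, Matrix.vecMul_vecMul, hNM, Matrix.vecMul_one]
  set c : ℕ → Matrix (Fin p) (Fin p) ℝ := fun k => if h : k < n then d ⟨k, h⟩ else if k = n then 1 else 0 with hc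
  set P : Polynomial (Matrix (Fin p) (Fin p) ℝ) := ∑ k ∈ Finset.range (n + 1), Polynomial.C (c k) * X ^ k with hP
  have hPc : ∀ m : ℕ, P.coeff m = if m < n + 1 then c m else 0 := fun m => coeff_mk n c m
  have hPmono : MonicDeg P n := by
    constructor
    · rw [hPc]; simp [hc]
    · intro k hk; rw [hPc]; simp [Nat.not_lt.2 hk]
  have hPvanish : ∀ k : ℕ, n < k → P.coeff k = 0 := hPmono.2
  refine ⟨P, ⟨hPmono, ?_⟩, ?_⟩
  · intro i hi
    rw [bform_X_right hp W hWint α i n P hPvanish, Finset.sum_range_succ]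
    have h2 : ∑ k ∈ Finset.range n, P.coeff k * mom W (α + k + i * θ)
        = ∑ k : Fin n, d k * M k ⟨i, hi⟩ := by
      rw [Finset.sum_range fun k => P.coeff k * mom W (α + k + i * θ)]
      refine Finset.sum_congr rfl fun k _ => ?_
      rw [hPc]
      simp only [hc, Nat.lt_succ_of_lt k.isLt, if_pos (Nat.lt_succ_of_lt k.isLt), dif_pos k.isLt]
      rfl
    rw [h2, hdM ⟨i, hi⟩, hPmono.1, one_mul]
    simp [hv]
  · rintro P' ⟨hP'mono, hP'orth⟩
    -- uniqueness
    have hPorth : ∀ i < n, bform θ W α P (X ^ i) = 0 := by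
      intro i hi
      rw [bform_X_right hp W hWint α i n P hPvanish, Finset.sum_range_succ]
      have h2 : ∑ k ∈ Finset.range n, P.coeff k * mom W (α + k + i * θ)
          = ∑ k : Fin n, d k * M k ⟨i, hi⟩ := by
        rw [Finset.sum_range fun k => P.coeff k * mom W (α + k + i * θ)]
        refine Finset.sum_congr rfl fun k _ => ?_
        rw [hPc]
        simp only [hc, Nat.lt_succ_of_lt k.isLt, if_pos (Nat.lt_succ_of_lt k.isLt), dif_pos k.isLt]
        rfl
      rw [h2, hdM ⟨i, hi⟩, hPmono.1, one_mul]
      simp [hv]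
    set e : Fin n → Matrix (Fin p) (Fin p) ℝ := fun k => P'.coeff k - P.coeff k with he
    have heM : Matrix.vecMul e M = 0 := by
      funext i'
      have hi : (i' : ℕ) < n := i'.isLt
      have h1 := hP'orth i' hi
      have h2 := hPorth i' hi
      rw [bform_X_right hp W hWint α i' n P' hP'mono.2, Finset.sum_range_succ, hP'mono.1, one_mul] at h1
      rw [bform_X_right hp W hWint α i' n P hPvanish, Finset.sum_range_succ, hPmono.1, one_mul] at h2
      have h3 : ∑ k ∈ Finset.range n, (P'.coeff k - P.coeff k) * mom W (α + k + (i' : ℕ) * θ) = 0 := by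
        simp only [sub_mul, Finset.sum_sub_distrib]
        have := sub_eq_zero.2 (h1.trans h2.symm)
        rw [add_sub_add_comm] at this
        simpa using this
      have h4 : Matrix.vecMul e M i' = ∑ k ∈ Finset.range n,
          (P'.coeff k - P.coeff k) * mom W (α + k + (i' : ℕ) * θ) := by
        rw [Finset.sum_range fun k => (P'.coeff k - P.coeff k) * mom W (α + k + (i' : ℕ) * θ)]
        simp only [Matrix.vecMul, dotProduct, he]
        rfl
      rw [h4, h3]
      rfl
    have he0 : e = 0 := by
      have : Matrix.vecMul (Matrix.vecMul e M) N = 0 := by rw [heM, Matrix.zero_vecMul]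
      rw [Matrix.vecMul_vecMul, hMN, Matrix.vecMul_one] at this
      exact this
    have hcoeq : ∀ m : ℕ, P'.coeff m = P.coeff m := by
      intro m
      rcases lt_or_ge m n with h | h
      · have := congrFun he0 ⟨m, h⟩
        simpa [he, sub_eq_zero] using this
      · rcases eq_or_lt_of_le h with h | h
        · rw [← h] at *
          rw [hP'mono.1, hPmono.1]
        · rw [hP'mono.2 m h, hPmono.2 m h]
      done
    exact Polynomial.ext hcoeq

set_option maxHeartbeats 1000000 in
lemma exQ {p θ : ℕ} (hp : 1 ≤ p) (W : ℝ → Matrix (Fin p) (Fin p) ℝ)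
    (hWint : ∀ (k : ℕ) (i j : Fin p), Integrable fun x : ℝ => x ^ k * W x i j)
    (n α : ℕ) (hn : 1 ≤ n) (hM : IsUnit (momMat θ W n α)) :
    ∃! Q : Polynomial (Matrix (Fin p) (Fin p) ℝ),
      MonicDeg Q n ∧ ∀ i < n, bform θ W α (X ^ i) Q = 0 := by
  set M : Matrix (Fin n) (Fin n) (Matrix (Fin p) (Fin p) ℝ) := momMat θ W n α with hMdef
  set N : Matrix (Fin n) (Fin n) (Matrix (Fin p) (Fin p) ℝ) := Units.val hM.unit⁻¹ with hNdef
  have hNM : N * M = 1 := by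
    have h := hM.unit.inv_mul
    rwa [hM.unit_spec] at h
  have hMN : M * N = 1 := by
    have h := hM.unit.mul_inv
    rwa [hM.unit_spec] at h
  set w : Fin n → Matrix (Fin p) (Fin p) ℝ := fun j => mom W (α + (j : ℕ) + n * θ) with hw
  set u : Fin n → Matrix (Fin p) (Fin p) ℝ := fun l => -(Matrix.mulVec N w l) with hu
  have huM : ∀ i' : Fin n, ∑ l : Fin n, M i' l * u l = -(w i') := by
    intro i'
    have h1 : ∑ l : Fin n, M i' l * u l = -(Matrix.mulVec M (Matrix.mulVec N w) i') := by
      simp only [hu, Matrix.mulVec, dotProduct, mul_neg, Finset.sum_neg_distrib]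
    rw [h1, Matrix.mulVec_mulVec, hMN, Matrix.one_mulVec]
  set c : ℕ → Matrix (Fin p) (Fin p) ℝ :=
    fun k => if h : k < n then (u ⟨k, h⟩)ᵀ else if k = n then 1 else 0 with hc
  set Q : Polynomial (Matrix (Fin p) (Fin p) ℝ) :=
    ∑ k ∈ Finset.range (n + 1), Polynomial.C (c k) * X ^ k with hQ
  have hQc : ∀ m : ℕ, Q.coeff m = if m < n + 1 then c m else 0 := fun m => coeff_mk n c m
  have hQmono : MonicDeg Q n := by
    constructor
    · rw [hQc]; simp [hc]
    · intro k hk; rw [hQc]; simp [Nat.not_lt.2 hk]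
  have hQvanish : ∀ k : ℕ, n < k → Q.coeff k = 0 := hQmono.2
  have hQorth : ∀ i < n, bform θ W α (X ^ i) Q = 0 := by
    intro i hi
    rw [bform_X_left hp W hWint α i n Q hQvanish, Finset.sum_range_succ]
    have h2 : ∑ l ∈ Finset.range n, mom W (α + i + l * θ) * (Q.coeff l)ᵀ
        = ∑ l : Fin n, M ⟨i, hi⟩ l * u l := by
      rw [Finset.sum_range fun l => mom W (α + i + l * θ) * (Q.coeff l)ᵀ]
      refine Finset.sum_congr rfl fun l _ => ?_
      rw [hQc]
      simp only [hc, if_pos (Nat.lt_succ_of_lt l.isLt), dif_pos l.isLt, Matrix.transpose_transpose]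
      rfl
    rw [h2, huM ⟨i, hi⟩, hQmono.1, Matrix.transpose_one, mul_one]
    simp [hw]
  refine ⟨Q, ⟨hQmono, hQorth⟩, ?_⟩
  rintro Q' ⟨hQ'mono, hQ'orth⟩
  set e : Fin n → Matrix (Fin p) (Fin p) ℝ := fun l => (Q'.coeff l - Q.coeff l)ᵀ with he
  have heM : Matrix.mulVec M e = 0 := by
    funext i'
    have hi : (i' : ℕ) < n := i'.isLt
    have h1 := hQ'orth i' hi
    have h2 := hQorth i' hi
    rw [bform_X_left hp W hWint α i' n Q' hQ'mono.2, Finset.sum_range_succ, hQ'mono.1,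
      Matrix.transpose_one, mul_one] at h1
    rw [bform_X_left hp W hWint α i' n Q hQvanish, Finset.sum_range_succ, hQmono.1,
      Matrix.transpose_one, mul_one] at h2
    have h3 : ∑ l ∈ Finset.range n,
        mom W (α + (i' : ℕ) + l * θ) * (Q'.coeff l - Q.coeff l)ᵀ = 0 := by
      simp only [Matrix.transpose_sub, mul_sub, Finset.sum_sub_distrib]
      have := sub_eq_zero.2 (h1.trans h2.symm)
      rw [add_sub_add_comm] at this
      simpa using this
    have h4 : Matrix.mulVec M e i' = ∑ l ∈ Finset.range n,
        mom W (α + (i' : ℕ) + l * θ) * (Q'.coeff l - Q.coeff l)ᵀ := by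
      rw [Finset.sum_range fun l => mom W (α + (i' : ℕ) + l * θ) * (Q'.coeff l - Q.coeff l)ᵀ]
      simp only [Matrix.mulVec, dotProduct, he]
      rfl
    rw [h4, h3]
    rfl
  have he0 : e = 0 := by
    have h5 : Matrix.mulVec N (Matrix.mulVec M e) = 0 := by rw [heM, Matrix.mulVec_zero]
    rw [Matrix.mulVec_mulVec, hNM, Matrix.one_mulVec] at h5
    exact h5
  have hcoeq : ∀ m : ℕ, Q'.coeff m = Q.coeff m := by
    intro m
    rcases lt_or_ge m n with h | h
    · have := congrFun he0 ⟨m, h⟩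
      have h6 : (Q'.coeff m - Q.coeff m)ᵀ = 0 := this
      have h7 : Q'.coeff m - Q.coeff m = 0 := by
        have := congrArg Matrix.transpose h6
        simpa using this
      exact sub_eq_zero.1 h7
    · rcases eq_or_lt_of_le h with h | h
      · rw [← h] at *
        rw [hQ'mono.1, hQmono.1]
      · rw [hQ'mono.2 m h, hQmono.2 m h]
  exact Polynomial.ext hcoeq

/-- existence and uniqueness of monic bi-orthogonal matrix
polynomials of degree `n`, given invertibility of the block moment matrix. -/
theorem statement1 (p θ : ℕ) (hp : 1 ≤ p) (hθ : 1 ≤ θ)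
    (W : ℝ → Matrix (Fin p) (Fin p) ℝ)
    (hWmeas : ∀ i j : Fin p, Measurable fun x : ℝ => W x i j)
    (hWint : ∀ (k : ℕ) (i j : Fin p), Integrable fun x : ℝ => x ^ k * W x i j)
    (n α : ℕ) (hn : 1 ≤ n)
    (hM : IsUnit (momMat θ W n α)) :
    (∃! P : Polynomial (Matrix (Fin p) (Fin p) ℝ),
        MonicDeg P n ∧ ∀ i < n, bform θ W α P (X ^ i) = 0) ∧
    (∃! Q : Polynomial (Matrix (Fin p) (Fin p) ℝ),
        MonicDeg Q n ∧ ∀ i < n, bform θ W α (X ^ i) Q = 0) :=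
  ⟨exP hp W hWint n α hn hM, exQ hp W hWint n α hn hM⟩
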